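/- Mangasarian–Stone characterization (static, complete-information case of Theorem 2): a mixed-strategy pair (σ1*, σ2*) of a finite bimatrix game (J1, J2) is a Nash equilibrium if and only if there exist scalars s*, w* such that (σ1*, σ2*, s*, w*) maximizes Σ_{a1,a2} σ1(a1)σ2(a2)[J1(a1,a2)+J2(a1,a2)] + s + w subject to Σ_{a1} σ1(a1)J2(a1,a2) ≤ -w for all a2, Σ_{a2} σ2(a2)J1(a1,a2) ≤ -s for all a1, and σ1 ∈ ΔA1, σ2 ∈ ΔA2, and at the optimum the objective value equals 0. -/

import Mathlib

open Finset

/-- A mixed-strategy Nash equilibrium of a finite bimatrix game. -/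
def IsMixedNE {A1 A2 : Type*} [Fintype A1] [Fintype A2]
    (G1 G2 : A1 → A2 → ℝ) (σ1 : A1 → ℝ) (σ2 : A2 → ℝ) : Prop :=
  (∀ a, 0 ≤ σ1 a) ∧ (∑ a, σ1 a = 1) ∧ (∀ a, 0 ≤ σ2 a) ∧ (∑ a, σ2 a = 1) ∧
  (∀ τ1 : A1 → ℝ, (∀ a, 0 ≤ τ1 a) → ∑ a, τ1 a = 1 →
    ∑ a1, ∑ a2, τ1 a1 * σ2 a2 * G1 a1 a2 ≤ ∑ a1, ∑ a2, σ1 a1 * σ2 a2 * G1 a1 a2) ∧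
  (∀ τ2 : A2 → ℝ, (∀ a, 0 ≤ τ2 a) → ∑ a, τ2 a = 1 →
    ∑ a1, ∑ a2, σ1 a1 * τ2 a2 * G2 a1 a2 ≤ ∑ a1, ∑ a2, σ1 a1 * σ2 a2 * G2 a1 a2)

/-- Feasibility for the Mangasarian–Stone bilinear program. -/
def MSFeasible {A1 A2 : Type*} [Fintype A1] [Fintype A2]
    (J1 J2 : A1 → A2 → ℝ) (σ1 : A1 → ℝ) (σ2 : A2 → ℝ) (s w : ℝ) : Prop :=
  (∀ a, 0 ≤ σ1 a) ∧ (∑ a, σ1 a = 1) ∧ (∀ a, 0 ≤ σ2 a) ∧ (∑ a, σ2 a = 1) ∧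
  (∀ a2, ∑ a1, σ1 a1 * J2 a1 a2 ≤ -w) ∧
  (∀ a1, ∑ a2, σ2 a2 * J1 a1 a2 ≤ -s)

/-- Objective of the Mangasarian–Stone bilinear program. -/
def MSObj {A1 A2 : Type*} [Fintype A1] [Fintype A2]
    (J1 J2 : A1 → A2 → ℝ) (σ1 : A1 → ℝ) (σ2 : A2 → ℝ) (s w : ℝ) : ℝ :=
  (∑ a1, ∑ a2, σ1 a1 * σ2 a2 * (J1 a1 a2 + J2 a1 a2)) + s + w

lemma avg_le {A : Type*} [Fintype A] (τ : A → ℝ) (f : A → ℝ) (c : ℝ)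
    (hτ : ∀ a, 0 ≤ τ a) (hs : ∑ a, τ a = 1) (hf : ∀ a, f a ≤ c) :
    ∑ a, τ a * f a ≤ c := by
  calc ∑ a, τ a * f a ≤ ∑ a, τ a * c :=
        Finset.sum_le_sum fun a _ => mul_le_mul_of_nonneg_left (hf a) (hτ a)
    _ = (∑ a, τ a) * c := by rw [Finset.sum_mul]
    _ = c := by rw [hs, one_mul]

lemma split_obj {A1 A2 : Type*} [Fintype A1] [Fintype A2]
    (J1 J2 : A1 → A2 → ℝ) (τ1 : A1 → ℝ) (τ2 : A2 → ℝ) :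
    ∑ a1, ∑ a2, τ1 a1 * τ2 a2 * (J1 a1 a2 + J2 a1 a2)
      = (∑ a1, ∑ a2, τ1 a1 * τ2 a2 * J1 a1 a2)
        + ∑ a1, ∑ a2, τ1 a1 * τ2 a2 * J2 a1 a2 := by
  rw [← Finset.sum_add_distrib]
  refine Finset.sum_congr rfl fun a1 _ => ?_
  rw [← Finset.sum_add_distrib]
  exact Finset.sum_congr rfl fun a2 _ => by ring

lemma sum1_le {A1 A2 : Type*} [Fintype A1] [Fintype A2]
    (J1 : A1 → A2 → ℝ) (τ1 : A1 → ℝ) (τ2 : A2 → ℝ) (s : ℝ)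
    (hτ1 : ∀ a, 0 ≤ τ1 a) (hτ1s : ∑ a, τ1 a = 1)
    (h : ∀ a1, ∑ a2, τ2 a2 * J1 a1 a2 ≤ -s) :
    ∑ a1, ∑ a2, τ1 a1 * τ2 a2 * J1 a1 a2 ≤ -s := by
  have : ∀ a1, ∑ a2, τ1 a1 * τ2 a2 * J1 a1 a2 = τ1 a1 * ∑ a2, τ2 a2 * J1 a1 a2 := by
    intro a1; rw [Finset.mul_sum]; exact Finset.sum_congr rfl fun a2 _ => by ring
  simp_rw [this]
  exact avg_le τ1 _ _ hτ1 hτ1s h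

lemma sum2_le {A1 A2 : Type*} [Fintype A1] [Fintype A2]
    (J2 : A1 → A2 → ℝ) (τ1 : A1 → ℝ) (τ2 : A2 → ℝ) (w : ℝ)
    (hτ2 : ∀ a, 0 ≤ τ2 a) (hτ2s : ∑ a, τ2 a = 1)
    (h : ∀ a2, ∑ a1, τ1 a1 * J2 a1 a2 ≤ -w) :
    ∑ a1, ∑ a2, τ1 a1 * τ2 a2 * J2 a1 a2 ≤ -w := by
  rw [Finset.sum_comm]
  have : ∀ a2, ∑ a1, τ1 a1 * τ2 a2 * J2 a1 a2 = τ2 a2 * ∑ a1, τ1 a1 * J2 a1 a2 := by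
    intro a2; rw [Finset.mul_sum]; exact Finset.sum_congr rfl fun a1 _ => by ring
  simp_rw [this]
  exact avg_le τ2 _ _ hτ2 hτ2s h

lemma obj_nonpos {A1 A2 : Type*} [Fintype A1] [Fintype A2]
    (J1 J2 : A1 → A2 → ℝ) (τ1 : A1 → ℝ) (τ2 : A2 → ℝ) (s w : ℝ)
    (h : MSFeasible J1 J2 τ1 τ2 s w) : MSObj J1 J2 τ1 τ2 s w ≤ 0 := by
  obtain ⟨h1, h1s, h2, h2s, hw, hs⟩ := h
  unfold MSObj
  rw [split_obj]
  have A := sum1_le J1 τ1 τ2 s h1 h1s hs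
  have B := sum2_le J2 τ1 τ2 w h2 h2s hw
  linarith

/-- Mangasarian–Stone characterization of mixed Nash equilibria of a finite
bimatrix game by a bilinear program whose optimal value is 0. -/
theorem stmt15 {A1 A2 : Type*} [Fintype A1] [Fintype A2]
    (J1 J2 : A1 → A2 → ℝ) (σ1 : A1 → ℝ) (σ2 : A2 → ℝ)
    (hσ1 : ∀ a, 0 ≤ σ1 a) (hσ1s : ∑ a, σ1 a = 1)
    (hσ2 : ∀ a, 0 ≤ σ2 a) (hσ2s : ∑ a, σ2 a = 1) :
    IsMixedNE J1 J2 σ1 σ2 ↔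
    ∃ s w : ℝ, MSFeasible J1 J2 σ1 σ2 s w ∧
      (∀ (τ1 : A1 → ℝ) (τ2 : A2 → ℝ) (s' w' : ℝ), MSFeasible J1 J2 τ1 τ2 s' w' →
        MSObj J1 J2 τ1 τ2 s' w' ≤ MSObj J1 J2 σ1 σ2 s w) ∧
      MSObj J1 J2 σ1 σ2 s w = 0 := by
  classical
  constructor
  · rintro ⟨-, -, -, -, hNE1, hNE2⟩
    refine ⟨-(∑ a1, ∑ a2, σ1 a1 * σ2 a2 * J1 a1 a2),
            -(∑ a1, ∑ a2, σ1 a1 * σ2 a2 * J2 a1 a2), ?_, ?_, ?_⟩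
    · refine ⟨hσ1, hσ1s, hσ2, hσ2s, ?_, ?_⟩
      · intro a2
        rw [neg_neg]
        have h := hNE2 (fun b => if b = a2 then (1:ℝ) else 0)
          (fun b => by split <;> norm_num) (by simp)
        calc ∑ a1, σ1 a1 * J2 a1 a2
            = ∑ a1, ∑ b, σ1 a1 * (if b = a2 then (1:ℝ) else 0) * J2 a1 b := by
              refine Finset.sum_congr rfl fun a1 _ => ?_
              simp [mul_ite, ite_mul]
          _ ≤ _ := h
      · intro a1
        rw [neg_neg]
        have h := hNE1 (fun b => if b = a1 then (1:ℝ) else 0)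
          (fun b => by split <;> norm_num) (by simp)
        calc ∑ a2, σ2 a2 * J1 a1 a2
            = ∑ b, ∑ a2, (if b = a1 then (1:ℝ) else 0) * σ2 a2 * J1 b a2 := by
              simp [ite_mul]
          _ ≤ _ := h
    · intro τ1 τ2 s' w' hfeas
      have h1 := obj_nonpos J1 J2 τ1 τ2 s' w' hfeas
      have h2 : MSObj J1 J2 σ1 σ2
          (-(∑ a1, ∑ a2, σ1 a1 * σ2 a2 * J1 a1 a2))
          (-(∑ a1, ∑ a2, σ1 a1 * σ2 a2 * J2 a1 a2)) = 0 := by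
        unfold MSObj; rw [split_obj]; ring
      linarith
    · unfold MSObj; rw [split_obj]; ring
  · rintro ⟨s, w, ⟨-, -, -, -, hw, hs⟩, -, hzero⟩
    have h1 := sum1_le J1 σ1 σ2 s hσ1 hσ1s hs
    have h2 := sum2_le J2 σ1 σ2 w hσ2 hσ2s hw
    unfold MSObj at hzero
    rw [split_obj] at hzero
    have e1 : ∑ a1, ∑ a2, σ1 a1 * σ2 a2 * J1 a1 a2 = -s := by linarith
    have e2 : ∑ a1, ∑ a2, σ1 a1 * σ2 a2 * J2 a1 a2 = -w := by linarith
    refine ⟨hσ1, hσ1s, hσ2, hσ2s, ?_, ?_⟩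
    · intro τ1 hτ1 hτ1s
      rw [e1]
      exact sum1_le J1 τ1 σ2 s hτ1 hτ1s hs
    · intro τ2 hτ2 hτ2s
      rw [e2]
      exact sum2_le J2 σ1 τ2 w hτ2 hτ2s hw
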